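/- For positive definite matrices p, q and r, s ≥ 0 with r + s ≤ 1 and r < 1, the t-spectral mean satisfies the semigroup-type property p ♮_{r+s} q = (p ♮_r q) ♮_{s/(1-r)} q. -/

import Mathlib

open Matrix
open scoped ComplexOrder

noncomputable def mpow {m : Type*} [Fintype m] [DecidableEq m]
    (A : Matrix m m ℂ) (t : ℝ) : Matrix m m ℂ :=
  if h : A.IsHermitian then
    (h.eigenvectorUnitary : Matrix m m ℂ) *
      Matrix.diagonal (fun i => ((h.eigenvalues i ^ t : ℝ) : ℂ)) *
      star (h.eigenvectorUnitary : Matrix m m ℂ)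
  else A

/-- t-metric geometric mean `A ♯ₜ B`. -/
noncomputable def msharp {m : Type*} [Fintype m] [DecidableEq m]
    (A B : Matrix m m ℂ) (t : ℝ) : Matrix m m ℂ :=
  mpow A (1/2) * mpow (mpow A (-(1/2)) * B * mpow A (-(1/2))) t * mpow A (1/2)

/-- t-spectral geometric mean `A ♮ₜ B`. -/
noncomputable def mnat {m : Type*} [Fintype m] [DecidableEq m]
    (A B : Matrix m m ℂ) (t : ℝ) : Matrix m m ℂ :=
  mpow (msharp A⁻¹ B (1/2)) t * A * mpow (msharp A⁻¹ B (1/2)) t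

/-- Eigenvalues in non-increasing order (junk value `0` if not Hermitian). -/
noncomputable def eigsDesc {n : ℕ} (A : Matrix (Fin n) (Fin n) ℂ) : Fin n → ℝ :=
  if h : A.IsHermitian then (fun i => h.eigenvalues (Tuple.sort h.eigenvalues i.rev)) else 0

/-- `x` is log-majorized by `y` (both listed in non-increasing order). -/
def LogMaj {n : ℕ} (x y : Fin n → ℝ) : Prop :=
  (∀ k : ℕ, ∏ i ∈ Finset.univ.filter (fun i : Fin n => (i : ℕ) < k), x i ≤
      ∏ i ∈ Finset.univ.filter (fun i : Fin n => (i : ℕ) < k), y i) ∧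
    ∏ i, x i = ∏ i, y i

/-- k-th compound matrix. -/
noncomputable def compound {n : ℕ} (k : ℕ) (A : Matrix (Fin n) (Fin n) ℂ) :
    Matrix {s : Finset (Fin n) // s.card = k} {s : Finset (Fin n) // s.card = k} ℂ :=
  fun s t => (A.submatrix (fun i => (s.1.orderIsoOfFin s.2 i : Fin n))
    (fun i => (t.1.orderIsoOfFin t.2 i : Fin n))).det


variable {k : Type*} [Fintype k] [DecidableEq k]

lemma spectrum_pos {A : Matrix k k ℂ} (hA : A.PosDef) :
    ∀ x ∈ spectrum ℝ A, 0 < x := by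
  intro x hx
  rw [Matrix.IsHermitian.spectrum_real_eq_range_eigenvalues hA.1] at hx
  obtain ⟨i, rfl⟩ := hx
  exact hA.eigenvalues_pos i

lemma contOn {A : Matrix k k ℂ} (hA : A.PosDef) (t : ℝ) :
    ContinuousOn (fun x : ℝ => x ^ t) (spectrum ℝ A) := fun x hx =>
  (Real.continuousAt_rpow_const x t (Or.inl (spectrum_pos hA x hx).ne')).continuousWithinAt

lemma mpow_eq_cfc {A : Matrix k k ℂ} (hA : A.IsHermitian) (t : ℝ) :
    mpow A t = cfc (fun x : ℝ => x ^ t) A := by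
  rw [Matrix.IsHermitian.cfc_eq hA, mpow, dif_pos hA]
  rfl

lemma posDef_conj' {A B : Matrix k k ℂ} (hA : A.PosDef) (hB : IsUnit B) :
    (Bᴴ * A * B).PosDef := by
  refine Matrix.PosDef.of_dotProduct_mulVec_pos (isHermitian_conjTranspose_mul_mul B hA.1) fun x hx => ?_
  have hinj : Function.Injective B.mulVec := Matrix.mulVec_injective_iff_isUnit.mpr hB
  have hx' : B *ᵥ x ≠ 0 := fun h => hx (hinj (h.trans (B.mulVec_zero).symm))
  simpa only [star_mulVec, dotProduct_mulVec, vecMul_vecMul] using hA.dotProduct_mulVec_pos hx'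

lemma posDef_conj {A B : Matrix k k ℂ} (hA : A.PosDef) (hB : IsUnit B) :
    (B * A * Bᴴ).PosDef := by
  simpa only [conjTranspose_conjTranspose] using posDef_conj' hA ((isUnit_conjTranspose _).mpr hB)

lemma mpow_posDef {A : Matrix k k ℂ} (hA : A.PosDef) (t : ℝ) : (mpow A t).PosDef := by
  rw [mpow, dif_pos hA.1]
  have hU : IsUnit (hA.1.eigenvectorUnitary : Matrix k k ℂ) :=
    (Unitary.toUnits hA.1.eigenvectorUnitary).isUnit
  have hD : (Matrix.diagonal (fun i => ((hA.1.eigenvalues i ^ t : ℝ) : ℂ))).PosDef := by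
    rw [Matrix.posDef_diagonal_iff]
    intro i
    exact_mod_cast Real.rpow_pos_of_pos (hA.eigenvalues_pos i) t
  simpa only [Matrix.star_eq_conjTranspose] using posDef_conj hD hU

lemma mpow_mul_mpow {A : Matrix k k ℂ} (hA : A.PosDef) (a b : ℝ) :
    mpow A a * mpow A b = mpow A (a + b) := by
  rw [mpow_eq_cfc hA.1, mpow_eq_cfc hA.1, mpow_eq_cfc hA.1,
    ← cfc_mul _ _ A (contOn hA a) (contOn hA b)]
  exact cfc_congr fun x hx => (Real.rpow_add (spectrum_pos hA x hx) a b).symm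

lemma mpow_zero {A : Matrix k k ℂ} (hA : A.IsHermitian) : mpow A 0 = 1 := by
  rw [mpow_eq_cfc hA]
  simp only [Real.rpow_zero]
  exact cfc_const_one ℝ A hA.isSelfAdjoint

lemma mpow_one {A : Matrix k k ℂ} (hA : A.IsHermitian) : mpow A 1 = A := by
  rw [mpow_eq_cfc hA]
  simp only [Real.rpow_one]
  exact cfc_id' ℝ A hA.isSelfAdjoint

lemma mpow_mpow {A : Matrix k k ℂ} (hA : A.PosDef) (a b : ℝ) :
    mpow (mpow A a) b = mpow A (a * b) := by
  rw [mpow_eq_cfc (mpow_posDef hA a).1, mpow_eq_cfc hA.1, mpow_eq_cfc hA.1]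
  have hg : ContinuousOn (fun x : ℝ => x ^ b) ((fun x : ℝ => x ^ a) '' spectrum ℝ A) := by
    rintro y ⟨x, hx, rfl⟩
    exact (Real.continuousAt_rpow_const _ b
      (Or.inl (Real.rpow_pos_of_pos (spectrum_pos hA x hx) a).ne')).continuousWithinAt
  rw [← cfc_comp _ _ A hA.1.isSelfAdjoint hg (contOn hA a)]
  exact cfc_congr fun x hx => by
    simp only [Function.comp_apply]
    rw [← Real.rpow_mul (spectrum_pos hA x hx).le]

lemma inv_eq_mpow {A : Matrix k k ℂ} (hA : A.PosDef) : A⁻¹ = mpow A (-1) := by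
  refine Matrix.inv_eq_right_inv ?_
  nth_rewrite 1 [← mpow_one hA.1]
  rw [mpow_mul_mpow hA]
  norm_num
  exact mpow_zero hA.1

lemma mpow_inv {A : Matrix k k ℂ} (hA : A.PosDef) (t : ℝ) : mpow A⁻¹ t = mpow A (-t) := by
  rw [inv_eq_mpow hA, mpow_mpow hA, neg_one_mul]

lemma eq_mpow_half {C X : Matrix k k ℂ} (hC : C.PosDef) (hX : X.PosSemidef)
    (h : X * X = C) : X = mpow C (1/2) := by
  have h1 : X ^ 2 = C := by rw [sq, h]
  have h2 : mpow C (1/2) ^ 2 = C := by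
    rw [sq, mpow_mul_mpow hC]
    norm_num
    exact mpow_one hC.1
  open scoped MatrixOrder in
  rw [← CFC.sqrt_unique h hX.nonneg,
    ← CFC.sqrt_unique (show mpow C (1/2) * mpow C (1/2) = C by rw [← sq]; exact h2) (mpow_posDef hC (1/2)).posSemidef.nonneg]


lemma mpow_conj_posDef {A X : Matrix k k ℂ} (hA : A.PosDef) (hX : X.PosDef) (t : ℝ) :
    (mpow A t * X * mpow A t).PosDef := by
  have h := posDef_conj hX (mpow_posDef hA t).isUnit
  rwa [(mpow_posDef hA t).1.eq] at h

lemma msharp_inv_eq {A B : Matrix k k ℂ} (hA : A.PosDef) (t : ℝ) :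
    msharp A⁻¹ B t =
      mpow A (-(1/2)) * mpow (mpow A (1/2) * B * mpow A (1/2)) t * mpow A (-(1/2)) := by
  rw [msharp, mpow_inv hA, mpow_inv hA, neg_neg]

lemma msharp_inv_posDef {A B : Matrix k k ℂ} (hA : A.PosDef) (hB : B.PosDef) :
    (msharp A⁻¹ B (1/2)).PosDef := by
  rw [msharp_inv_eq hA]
  exact mpow_conj_posDef hA (mpow_posDef (mpow_conj_posDef hA hB (1/2)) (1/2)) (-(1/2))

private lemma alg1 {M : Type*} [Ring M] (m h s A B : M) (h1 : m * h = 1) (h2 : h * m = 1)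
    (h3 : h * h = A) (h4 : s * s = h * B * h) : (m * s * m) * A * (m * s * m) = B := by
  have hmid : m * A * m = 1 := by
    rw [← h3]
    calc m * (h * h) * m = (m * h) * (h * m) := by noncomm_ring
    _ = 1 := by rw [h1, h2, one_mul]
  calc (m * s * m) * A * (m * s * m) = (m * s) * (m * A * m) * (s * m) := by noncomm_ring
  _ = m * (s * s) * m := by rw [hmid, mul_one]; noncomm_ring
  _ = (m * h) * B * (h * m) := by rw [h4]; noncomm_ring
  _ = B := by rw [h1, h2, one_mul, mul_one]

lemma mpow_half_mul_half {A : Matrix k k ℂ} (hA : A.PosDef) :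
    mpow A (1/2) * mpow A (1/2) = A := by
  rw [mpow_mul_mpow hA]
  norm_num
  exact mpow_one hA.1

lemma mpow_neg_half_mul_half {A : Matrix k k ℂ} (hA : A.PosDef) :
    mpow A (-(1/2)) * mpow A (1/2) = 1 := by
  rw [mpow_mul_mpow hA]
  norm_num
  exact mpow_zero hA.1

lemma mpow_half_mul_neg_half {A : Matrix k k ℂ} (hA : A.PosDef) :
    mpow A (1/2) * mpow A (-(1/2)) = 1 := by
  rw [mpow_mul_mpow hA]
  norm_num
  exact mpow_zero hA.1

lemma msharp_inv_mul {A B : Matrix k k ℂ} (hA : A.PosDef) (hB : B.PosDef) :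
    msharp A⁻¹ B (1/2) * A * msharp A⁻¹ B (1/2) = B := by
  rw [msharp_inv_eq hA]
  have hC : (mpow A (1/2) * B * mpow A (1/2)).PosDef := mpow_conj_posDef hA hB (1/2)
  exact alg1 _ _ _ _ _ (mpow_neg_half_mul_half hA) (mpow_half_mul_neg_half hA)
    (mpow_half_mul_half hA) (mpow_half_mul_half hC)

private lemma alg2 {M : Type*} [Ring M] (h X B : M) (hXX : X * (h * h) * X = B) :
    (h * X * h) * (h * X * h) = h * B * h := by
  rw [← hXX]; noncomm_ring

private lemma alg3 {M : Type*} [Ring M] (m h X : M) (h1 : m * h = 1) (h2 : h * m = 1) :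
    m * (h * X * h) * m = X := by
  calc m * (h * X * h) * m = (m * h) * X * (h * m) := by noncomm_ring
  _ = X := by rw [h1, h2, one_mul, mul_one]

lemma msharp_inv_unique {A B X : Matrix k k ℂ} (hA : A.PosDef) (hB : B.PosDef)
    (hX : X.PosDef) (hXAX : X * A * X = B) : msharp A⁻¹ B (1/2) = X := by
  rw [msharp_inv_eq hA]
  have hC : (mpow A (1/2) * B * mpow A (1/2)).PosDef := mpow_conj_posDef hA hB (1/2)
  have hY : (mpow A (1/2) * X * mpow A (1/2)).PosDef := mpow_conj_posDef hA hX (1/2)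
  have hYY : (mpow A (1/2) * X * mpow A (1/2)) * (mpow A (1/2) * X * mpow A (1/2)) =
      mpow A (1/2) * B * mpow A (1/2) := by
    refine alg2 _ _ _ ?_
    rw [mpow_half_mul_half hA, hXAX]
  rw [← eq_mpow_half hC hY.posSemidef hYY]
  exact alg3 _ _ _ (mpow_neg_half_mul_half hA) (mpow_half_mul_neg_half hA)



theorem mnat_add_exponent {n : ℕ} (p q : Matrix (Fin n) (Fin n) ℂ)
    (hp : p.PosDef) (hq : q.PosDef) (r s : ℝ)
    (hr : 0 ≤ r) (hs : 0 ≤ s) (hrs : r + s ≤ 1) (hr1 : r < 1) :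
    mnat p q (r + s) = mnat (mnat p q r) q (s / (1 - r)) := by
  have h1r : (1 : ℝ) - r ≠ 0 := sub_ne_zero.mpr hr1.ne'
  set f := msharp p⁻¹ q (1/2) with hfdef
  have hf : f.PosDef := msharp_inv_posDef hp hq
  have hfpf : f * p * f = q := msharp_inv_mul hp hq
  have hB : (mnat p q r).PosDef := by
    rw [mnat, ← hfdef]
    exact mpow_conj_posDef hf hp r
  have hX : (mpow f (1 - r)).PosDef := mpow_posDef hf (1 - r)
  have hXBX : mpow f (1 - r) * mnat p q r * mpow f (1 - r) = q := by
    rw [mnat, ← hfdef]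
    calc mpow f (1 - r) * (mpow f r * p * mpow f r) * mpow f (1 - r)
        = (mpow f (1 - r) * mpow f r) * p * (mpow f r * mpow f (1 - r)) := by noncomm_ring
    _ = q := by
        rw [mpow_mul_mpow hf, mpow_mul_mpow hf]
        rw [show (1 - r) + r = 1 by ring, show r + (1 - r) = 1 by ring, mpow_one hf.1, hfpf]
  have hu : msharp (mnat p q r)⁻¹ q (1/2) = mpow f (1 - r) :=
    msharp_inv_unique hB hq hX hXBX
  rw [show mnat (mnat p q r) q (s / (1 - r)) =
      mpow (msharp (mnat p q r)⁻¹ q (1/2)) (s / (1 - r)) * (mnat p q r) *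
        mpow (msharp (mnat p q r)⁻¹ q (1/2)) (s / (1 - r)) from rfl]
  rw [hu, mpow_mpow hf, show (1 - r) * (s / (1 - r)) = s from mul_div_cancel₀ s h1r]
  rw [mnat, ← hfdef, mnat, ← hfdef]
  calc mpow f (r + s) * p * mpow f (r + s)
      = (mpow f s * mpow f r) * p * (mpow f r * mpow f s) := by
        rw [mpow_mul_mpow hf, mpow_mul_mpow hf, show s + r = r + s by ring]
  _ = mpow f s * (mpow f r * p * mpow f r) * mpow f s := by noncomm_ring
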